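/- Let a, b ∈ ℤ with a ≠ 0, b ≥ 0, and a² > 3b. The quadratic form Q(x₁,x₂,x₃) = (a² − 2b)(x₁² + x₂² + x₃²) + 2b(x₁x₂ + x₁x₃ + x₂x₃) satisfies Q(x) ≥ a² − 2b for all nonzero x ∈ ℤ³ if and only if a² ≥ 4b. -/
import Mathlib

lemma sq_one_le (x : ℤ) (hx : x ≠ 0) : 1 ≤ x ^ 2 := by
  nlinarith [Int.one_le_abs hx, sq_abs x, abs_nonneg x]

lemma key_ineq (x₁ x₂ x₃ : ℤ) (h : ¬(x₁ = 0 ∧ x₂ = 0 ∧ x₃ = 0)) :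
    1 ≤ x₁ ^ 2 + x₂ ^ 2 + x₃ ^ 2 ∧
      2 ≤ x₁ ^ 2 + x₂ ^ 2 + x₃ ^ 2 + (x₁ + x₂ + x₃) ^ 2 := by
  by_cases h1 : x₁ = 0
  · by_cases h2 : x₂ = 0
    · by_cases h3 : x₃ = 0
      · exact absurd ⟨h1, h2, h3⟩ h
      · subst h1; subst h2
        constructor <;> nlinarith [sq_one_le x₃ h3]
    · subst h1
      constructor <;>
        nlinarith [sq_one_le x₂ h2, sq_nonneg x₃, sq_nonneg (x₂ + x₃)]
  · by_cases h2 : x₂ = 0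
    · subst h2
      constructor <;>
        nlinarith [sq_one_le x₁ h1, sq_nonneg x₃, sq_nonneg (x₁ + x₃)]
    · constructor <;>
        nlinarith [sq_one_le x₁ h1, sq_one_le x₂ h2, sq_nonneg x₃,
          sq_nonneg (x₁ + x₂ + x₃)]

theorem stmt_9 (a b : ℤ) (ha : a ≠ 0) (hb : 0 ≤ b) (h3b : a ^ 2 > 3 * b) :
    (∀ x₁ x₂ x₃ : ℤ, ¬(x₁ = 0 ∧ x₂ = 0 ∧ x₃ = 0) →
        (a ^ 2 - 2 * b) * (x₁ ^ 2 + x₂ ^ 2 + x₃ ^ 2) +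
            2 * b * (x₁ * x₂ + x₁ * x₃ + x₂ * x₃) ≥ a ^ 2 - 2 * b) ↔
      a ^ 2 ≥ 4 * b := by
  constructor
  · intro H
    have := H 1 (-1) 0 (by norm_num)
    nlinarith [this]
  · intro h4 x₁ x₂ x₃ hx
    obtain ⟨hs1, hs2⟩ := key_ineq x₁ x₂ x₃ hx
    nlinarith [mul_nonneg (sub_nonneg.2 h4)
        (by linarith : (0:ℤ) ≤ x₁ ^ 2 + x₂ ^ 2 + x₃ ^ 2 - 1),
      mul_nonneg hb
        (by linarith : (0:ℤ) ≤ x₁ ^ 2 + x₂ ^ 2 + x₃ ^ 2 + (x₁ + x₂ + x₃) ^ 2 - 2)]
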